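/- Let θ : V → V be a linear involution with θ(Δ) = Δ and ⟨θx, (θα)∨⟩ = ⟨x, α∨⟩ for all x ∈ V and α ∈ Δ (so in particular (θα)∨ = −α∨ when θα = −α). Call a root β complex if θβ ∉ {β, −β}, and call it real if θβ = −β. Let c ∈ V* lie in the ℤ-span of the set of real coroots {α∨ : α ∈ Δ, θα = −α}. Suppose S and S′ are subsets of Δ such that the set of complex roots of Δ is the disjoint union of the four-element sets {β, −β, θβ, −θβ} over β ∈ S, and also the disjoint union of the sets {β, −β, θβ, −θβ} over β ∈ S′. Then Σ_{β ∈ S} ⟨β, c⟩ ≡ Σ_{β ∈ S′} ⟨β, c⟩ (mod 2). -/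

import Mathlib

/-- A reduced crystallographic root system in a real vector space `V`:
a finite set of roots `Δ`, with a coroot `α∨ ∈ V*` for each root `α`. -/
structure RootSystemData (V : Type*) [AddCommGroup V] [Module ℝ V] where
  Δ : Set V
  coroot : V → Module.Dual ℝ V
  finite : Δ.Finite
  pairing_int : ∀ α ∈ Δ, ∀ β ∈ Δ, ∃ n : ℤ, coroot β α = (n : ℝ)
  pairing_self : ∀ α ∈ Δ, coroot α α = 2
  reflect_mem : ∀ α ∈ Δ, ∀ β ∈ Δ, β - coroot α β • α ∈ Δ
  reduced : ∀ α ∈ Δ, ∀ t : ℝ, t • α ∈ Δ → t = 1 ∨ t = -1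
  neg_mem : ∀ α ∈ Δ, -α ∈ Δ
  coroot_neg : ∀ α ∈ Δ, coroot (-α) = - coroot α

variable {V : Type*} [AddCommGroup V] [Module ℝ V]

/-- The root lattice `R`: the ℤ-span of the roots. -/
def RootSystemData.rootLattice (P : RootSystemData V) : AddSubgroup V :=
  AddSubgroup.closure P.Δ

/-- The Weyl group `W ⊆ GL(V)`, generated by the reflections `s_α`. -/
def RootSystemData.weylGroup (P : RootSystemData V) : Subgroup (V ≃ₗ[ℝ] V) :=
  Subgroup.closure {w | ∃ α ∈ P.Δ, ∀ x : V, w x = x - P.coroot α x • α}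

/-- `x` is regular: `⟨x, α∨⟩ ≠ 0` for all roots `α`. -/
def RootSystemData.IsRegular (P : RootSystemData V) (x : V) : Prop :=
  ∀ α ∈ P.Δ, P.coroot α x ≠ 0

/-- Two (regular) elements lie in the same Weyl chamber: for each root,
the pairings have the same sign. -/
def RootSystemData.SameChamber (P : RootSystemData V) (x y : V) : Prop :=
  ∀ α ∈ P.Δ, (0 < P.coroot α x ↔ 0 < P.coroot α y)

/-- `x` is dominant with respect to the positive system `Δplus`. -/
def RootSystemData.IsDominant (P : RootSystemData V) (Δplus : Set V) (x : V) : Prop :=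
  ∀ α ∈ Δplus, 0 ≤ P.coroot α x

/-- `Δplus` is a system of positive roots. -/
def RootSystemData.IsPositiveSystem (P : RootSystemData V) (Δplus : Set V) : Prop :=
  Δplus ⊆ P.Δ ∧ (∀ α ∈ P.Δ, (α ∈ Δplus ↔ -α ∉ Δplus)) ∧
    (∀ α ∈ Δplus, ∀ β ∈ Δplus, α + β ∈ P.Δ → α + β ∈ Δplus)

/-- The set `Wλ₀ + R`. -/
def RootSystemData.wOrbitLat (P : RootSystemData V) (l0 : V) : Set V :=
  {x | ∃ w ∈ P.weylGroup, ∃ r ∈ P.rootLattice, x = w l0 + r}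

/-- `Δ` is simply laced: pairings of nonproportional roots lie in `{-1,0,1}`. -/
def RootSystemData.SimplyLaced (P : RootSystemData V) : Prop :=
  ∀ α ∈ P.Δ, ∀ β ∈ P.Δ, α ≠ β → α ≠ -β → P.coroot β α ∈ ({-1, 0, 1} : Set ℝ)

/-- The set of roots integral on `l`. -/
def RootSystemData.integralRoots (P : RootSystemData V) (l : V) : Set V :=
  {α | α ∈ P.Δ ∧ ∃ n : ℤ, P.coroot α l = (n : ℝ)}

/-- Independence of the character `ζ_cx` on the set of representatives of the complex
roots (Section 8): if `c` lies in the ℤ-span of the real coroots and `S`, `S′` are two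
sets of representatives of the quadruples `{β, −β, θβ, −θβ}` partitioning the complex
roots, then `Σ_{β ∈ S} ⟨β, c⟩ ≡ Σ_{β ∈ S′} ⟨β, c⟩ (mod 2)`. -/
theorem sum_over_complex_representatives_mod_two
    (P : RootSystemData V) (θ : V →ₗ[ℝ] V)
    (hinv : ∀ x : V, θ (θ x) = x)
    (hθΔ : ∀ α ∈ P.Δ, θ α ∈ P.Δ)
    (hθpair : ∀ x : V, ∀ α ∈ P.Δ, P.coroot (θ α) (θ x) = P.coroot α x)
    (c : Module.Dual ℝ V)
    (hc : c ∈ AddSubgroup.closure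
        {f : Module.Dual ℝ V | ∃ α ∈ P.Δ, θ α = -α ∧ f = P.coroot α})
    (S S' : Finset V)
    -- the quadruples over `S` cover exactly the complex roots
    (hScover : ∀ γ : V, (γ ∈ P.Δ ∧ θ γ ≠ γ ∧ θ γ ≠ -γ) ↔
       ∃ β ∈ S, γ = β ∨ γ = -β ∨ γ = θ β ∨ γ = -θ β)
    -- the quadruples over `S` are four-element sets and pairwise disjoint
    (hSfour : ∀ β ∈ S, β ≠ -β ∧ β ≠ θ β ∧ β ≠ -θ β ∧ -β ≠ θ β ∧ -β ≠ -θ β ∧ θ β ≠ -θ β)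
    (hSdisj : ∀ β ∈ S, ∀ β' ∈ S, β ≠ β' → ∀ γ : V,
       (γ = β ∨ γ = -β ∨ γ = θ β ∨ γ = -θ β) →
       (γ = β' ∨ γ = -β' ∨ γ = θ β' ∨ γ = -θ β') → False)
    -- likewise for `S′`
    (hS'cover : ∀ γ : V, (γ ∈ P.Δ ∧ θ γ ≠ γ ∧ θ γ ≠ -γ) ↔
       ∃ β ∈ S', γ = β ∨ γ = -β ∨ γ = θ β ∨ γ = -θ β)
    (hS'four : ∀ β ∈ S', β ≠ -β ∧ β ≠ θ β ∧ β ≠ -θ β ∧ -β ≠ θ β ∧ -β ≠ -θ β ∧ θ β ≠ -θ β)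
    (hS'disj : ∀ β ∈ S', ∀ β' ∈ S', β ≠ β' → ∀ γ : V,
       (γ = β ∨ γ = -β ∨ γ = θ β ∨ γ = -θ β) →
       (γ = β' ∨ γ = -β' ∨ γ = θ β' ∨ γ = -θ β') → False) :
    ∃ k : ℤ, (∑ β ∈ S, c β) - (∑ β ∈ S', c β) = 2 * (k : ℝ) := by
  classical
  -- c changes sign under θ, and is integral on roots
  have hAθ : ∀ x : V, c (θ x) = - c x := by
    intro x
    induction hc using AddSubgroup.closure_induction with
    | mem f hf =>
        obtain ⟨α, hα, hθα, rfl⟩ := hf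
        have := hθpair x α hα
        rw [hθα, P.coroot_neg α hα] at this
        have h2 : -(P.coroot α (θ x)) = P.coroot α x := by simpa using this
        linarith
    | zero => simp
    | add f g _ _ hf hg => simp [hf, hg]; ring
    | neg f _ hf => simp [hf]
  have hAint : ∀ β ∈ P.Δ, ∃ n : ℤ, c β = (n : ℝ) := by
    clear hAθ
    intro β hβ
    induction hc using AddSubgroup.closure_induction with
    | mem f hf =>
        obtain ⟨α, hα, hθα, rfl⟩ := hf
        exact P.pairing_int β hβ α hα
    | zero => exact ⟨0, by simp⟩
    | add f g _ _ hf hg =>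
        obtain ⟨n, hn⟩ := hf; obtain ⟨m, hm⟩ := hg
        exact ⟨n + m, by push_cast; simp [hn, hm]⟩
    | neg f _ hf =>
        obtain ⟨n, hn⟩ := hf
        exact ⟨-n, by push_cast; simp [hn]⟩
  -- symmetry of the quadruple relation
  have symm : ∀ a b : V, (a = b ∨ a = -b ∨ a = θ b ∨ a = -θ b) →
      (b = a ∨ b = -a ∨ b = θ a ∨ b = -θ a) := by
    intro a b h
    rcases h with rfl | rfl | rfl | rfl
    · exact Or.inl rfl
    · exact Or.inr (Or.inl (by simp))
    · exact Or.inr (Or.inr (Or.inl (hinv b).symm))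
    · refine Or.inr (Or.inr (Or.inr ?_))
      rw [map_neg, hinv, neg_neg]
  -- β ∈ S is a complex root
  have hScx : ∀ β ∈ S, β ∈ P.Δ ∧ θ β ≠ β ∧ θ β ≠ -β :=
    fun β hβ => (hScover β).2 ⟨β, hβ, Or.inl rfl⟩
  -- representative function
  have hrep : ∀ β ∈ S, ∃ β' ∈ S', β = β' ∨ β = -β' ∨ β = θ β' ∨ β = -θ β' :=
    fun β hβ => (hS'cover β).1 (hScx β hβ)
  set f : V → V := fun β => if h : β ∈ S then (hrep β h).choose else 0 with hf
  have hfS' : ∀ β ∈ S, f β ∈ S' := by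
    intro β hβ
    simp only [hf, dif_pos hβ]
    exact (hrep β hβ).choose_spec.1
  have hfrel : ∀ β ∈ S, β = f β ∨ β = -(f β) ∨ β = θ (f β) ∨ β = -θ (f β) := by
    intro β hβ
    simp only [hf, dif_pos hβ]
    exact (hrep β hβ).choose_spec.2
  -- uniqueness: f β is the unique element of S' whose quadruple contains β
  have hfuniq : ∀ β ∈ S, ∀ β' ∈ S',
      (β = β' ∨ β = -β' ∨ β = θ β' ∨ β = -θ β') → f β = β' := by
    intro β hβ β' hβ' hq
    by_contra hne
    exact hS'disj (f β) (hfS' β hβ) β' hβ' hne β (hfrel β hβ) hq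
  -- sum over S' equals sum over S of c ∘ f
  have hsum : ∑ β ∈ S, c (f β) = ∑ β ∈ S', c β := by
    refine Finset.sum_bij (fun β _ => f β) hfS' ?_ ?_ (fun _ _ => rfl)
    · intro b1 h1 b2 h2 he
      by_contra hne
      have he' : f b1 = f b2 := he
      have hq2 := symm b2 (f b2) (hfrel b2 h2)
      rw [← he'] at hq2
      exact hSdisj b1 h1 b2 h2 hne (f b1) (symm b1 (f b1) (hfrel b1 h1)) hq2
    · intro β' hβ'
      have hcx : β' ∈ P.Δ ∧ θ β' ≠ β' ∧ θ β' ≠ -β' :=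
        (hS'cover β').2 ⟨β', hβ', Or.inl rfl⟩
      obtain ⟨β, hβ, hq⟩ := (hScover β').1 hcx
      exact ⟨β, hβ, hfuniq β hβ β' hβ' (symm β' β hq)⟩
  -- each term of the difference is an even integer
  have hterm : ∀ β ∈ S, ∃ k : ℤ, c β - c (f β) = 2 * (k : ℝ) := by
    intro β hβ
    obtain ⟨n, hn⟩ := hAint β (hScx β hβ).1
    have hrel := hfrel β hβ
    rcases hrel with h | h | h | h
    · exact ⟨0, by rw [← h]; simp⟩
    · -- β = -f β, so c β = - c (f β)
      have : c (f β) = - c β := by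
        have := congrArg c h
        simp only [map_neg] at this
        linarith
      exact ⟨n, by rw [this, hn]; ring⟩
    · -- β = θ (f β), so c β = c (θ (f β)) = - c (f β)
      have : c (f β) = - c β := by
        have := congrArg c h
        rw [hAθ (f β)] at this
        linarith
      exact ⟨n, by rw [this, hn]; ring⟩
    · -- β = -θ (f β), so c β = c (f β)
      have : c (f β) = c β := by
        have := congrArg c h
        simp only [map_neg] at this
        rw [hAθ (f β)] at this
        linarith
      exact ⟨0, by rw [this]; simp⟩
  choose g hg using hterm
  refine ⟨∑ β ∈ S.attach, g β.1 β.2, ?_⟩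
  rw [← hsum, ← Finset.sum_sub_distrib]
  rw [← Finset.sum_attach S (fun β => c β - c (f β))]
  push_cast
  rw [Finset.mul_sum]
  exact Finset.sum_congr rfl fun β _ => hg β.1 β.2
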